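/- The maximum of |Δ_k(z) − p_k(z)| over the complex circle |z| = 1/√(8+8k) tends to 0 as k → ∞, where Δ_k and p_k are regarded as polynomials with real coefficients evaluated at complex arguments. -/

import Mathlib

open Filter Set

/-- `C_k = (2k-2)!/(k-1)!` as a complex number. -/
noncomputable def CcC (k : ℕ) : ℂ :=
  ((2 * k - 2).factorial : ℂ) / ((k - 1).factorial : ℂ)

/-- `p_k(z) = 1 − 2z − (7+8k)z²`. -/
noncomputable def PpC (k : ℕ) (z : ℂ) : ℂ := 1 - 2 * z - (7 + 8 * (k : ℂ)) * z ^ 2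

/-- `h_k(z) = 1 − z − C_k·z^{2k+1}`. -/
noncomputable def HhC (k : ℕ) (z : ℂ) : ℂ := 1 - z - CcC k * z ^ (2 * k + 1)

/-- `Δ_k(z) = p_k(z) + 4·C_k·z^{2k+1}·h_k(z)`. -/
noncomputable def DdC (k : ℕ) (z : ℂ) : ℂ :=
  PpC k z + 4 * CcC k * z ^ (2 * k + 1) * HhC k z

/-- The real radius `r_k = 1/√(8+8k)`. -/
noncomputable def rkR (k : ℕ) : ℝ := 1 / Real.sqrt (8 + 8 * k)

/-- The real quantity `A_k = C_k · r_k^{2k+1}`. -/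
noncomputable def AkR (k : ℕ) : ℝ :=
  (((2 * k - 2).factorial : ℝ) / ((k - 1).factorial : ℝ)) * rkR k ^ (2 * k + 1)

lemma rkR_nonneg (k : ℕ) : 0 ≤ rkR k := by
  unfold rkR
  positivity

lemma rkR_le_one (k : ℕ) : rkR k ≤ 1 := by
  unfold rkR
  rw [div_le_one (by positivity)]
  have : (1 : ℝ) ≤ 8 + 8 * k := by
    have : (0:ℝ) ≤ k := Nat.cast_nonneg k
    linarith
  nlinarith [Real.sq_sqrt (show (0:ℝ) ≤ 8 + 8 * k by positivity),
    Real.sqrt_nonneg (8 + 8 * (k:ℝ))]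

lemma AkR_nonneg (k : ℕ) : 0 ≤ AkR k := by
  unfold AkR
  have := rkR_nonneg k
  positivity

lemma abs_CcC (k : ℕ) :
    ‖CcC k‖ = ((2 * k - 2).factorial : ℝ) / ((k - 1).factorial : ℝ) := by
  unfold CcC
  rw [norm_div, Complex.norm_natCast, Complex.norm_natCast]

lemma pointwise_bound (k : ℕ) (z : ℂ)
    (hz : ‖z‖ = 1 / Real.sqrt (8 + 8 * k)) :
    ‖DdC k z - PpC k z‖ ≤ 4 * AkR k * (2 + AkR k) := by
  have hzr : ‖z‖ = rkR k := hz
  set C : ℝ := ((2 * k - 2).factorial : ℝ) / ((k - 1).factorial : ℝ) with hC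
  have hC0 : 0 ≤ C := by positivity
  have hd : DdC k z - PpC k z = 4 * CcC k * z ^ (2 * k + 1) * HhC k z := by
    unfold DdC; ring
  rw [hd]
  have habs : ‖4 * CcC k * z ^ (2 * k + 1) * HhC k z‖
      = 4 * C * rkR k ^ (2 * k + 1) * ‖HhC k z‖ := by
    rw [norm_mul, norm_mul, norm_mul, norm_pow, abs_CcC, hzr]
    norm_num [hC]
  rw [habs]
  have hAk : 4 * C * rkR k ^ (2 * k + 1) = 4 * AkR k := by
    unfold AkR; ring
  have hh : ‖HhC k z‖ ≤ 2 + AkR k := by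
    unfold HhC
    calc ‖1 - z - CcC k * z ^ (2 * k + 1)‖
        ≤ ‖1 - z‖ + ‖CcC k * z ^ (2 * k + 1)‖ := by
          exact (norm_sub_le _ _)
      _ ≤ (‖(1:ℂ)‖ + ‖z‖) + ‖CcC k * z ^ (2 * k + 1)‖ := by
          gcongr
          exact norm_sub_le _ _
      _ = 1 + rkR k + C * rkR k ^ (2 * k + 1) := by
          rw [norm_mul, norm_pow, abs_CcC, hzr, norm_one]
      _ ≤ 2 + AkR k := by
          unfold AkR
          have := rkR_le_one k
          nlinarith
  calc 4 * C * rkR k ^ (2 * k + 1) * ‖HhC k z‖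
      ≤ 4 * C * rkR k ^ (2 * k + 1) * (2 + AkR k) := by
        have h1 : 0 ≤ 4 * C * rkR k ^ (2 * k + 1) := by
          have := rkR_nonneg k; positivity
        exact mul_le_mul_of_nonneg_left hh h1
    _ = 4 * AkR k * (2 + AkR k) := by rw [hAk]

lemma AkR_le (k : ℕ) (hk : 1 ≤ k) : AkR k ≤ (1 / 4 : ℝ) ^ (k - 1) := by
  have hk0 : (0 : ℝ) < k := by exact_mod_cast hk
  -- C as a descFactorial
  have hle : k - 1 ≤ 2 * k - 2 := by omega
  have hsub : 2 * k - 2 - (k - 1) = k - 1 := by omega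
  have hfact : ((k - 1).factorial) * (2 * k - 2).descFactorial (k - 1)
      = (2 * k - 2).factorial := by
    have := Nat.factorial_mul_descFactorial hle
    rwa [hsub] at this
  have hCval : ((2 * k - 2).factorial : ℝ) / ((k - 1).factorial : ℝ)
      = ((2 * k - 2).descFactorial (k - 1) : ℝ) := by
    have hne : ((k - 1).factorial : ℝ) ≠ 0 := by positivity
    have h2 : (2 * k - 2).descFactorial (k - 1) * (k - 1).factorial
        = (2 * k - 2).factorial := by rw [mul_comm]; exact hfact
    rw [div_eq_iff hne]
    exact_mod_cast h2.symm
  have hCle : ((2 * k - 2).factorial : ℝ) / ((k - 1).factorial : ℝ)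
      ≤ ((2 * k : ℕ) : ℝ) ^ (k - 1) := by
    rw [hCval]
    have h1 : (2 * k - 2).descFactorial (k - 1) ≤ (2 * k - 2) ^ (k - 1) :=
      Nat.descFactorial_le_pow _ _
    have h2 : (2 * k - 2) ^ (k - 1) ≤ (2 * k) ^ (k - 1) :=
      Nat.pow_le_pow_left (by omega) _
    calc ((2 * k - 2).descFactorial (k - 1) : ℝ) ≤ ((2 * k - 2) ^ (k - 1) : ℕ) := by
          exact_mod_cast h1
      _ ≤ (((2 * k) ^ (k - 1) : ℕ) : ℝ) := by exact_mod_cast h2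
      _ = ((2 * k : ℕ) : ℝ) ^ (k - 1) := by push_cast; ring
  -- r ^ (2k+1) ≤ (1/(8+8k))^k
  have hr0 := rkR_nonneg k
  have hr1 := rkR_le_one k
  have hrsq : rkR k ^ 2 = 1 / (8 + 8 * (k : ℝ)) := by
    unfold rkR
    rw [div_pow, one_pow, Real.sq_sqrt (by positivity)]
  have hrpow : rkR k ^ (2 * k + 1) ≤ (1 / (8 + 8 * (k : ℝ))) ^ k := by
    have : rkR k ^ (2 * k + 1) = (rkR k ^ 2) ^ k * rkR k := by ring
    rw [this, hrsq]
    have h8 : (0:ℝ) ≤ (1 / (8 + 8 * (k : ℝ))) ^ k := by positivity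
    nlinarith
  have hstep : (1 / (8 + 8 * (k : ℝ))) ^ k ≤ (1 / (8 * (k : ℝ))) ^ k := by
    apply pow_le_pow_left₀ (by positivity)
    apply div_le_div_of_nonneg_left (by norm_num) (by positivity)
    linarith
  have hA : AkR k ≤ ((2 * k : ℕ) : ℝ) ^ (k - 1) * (1 / (8 * (k : ℝ))) ^ k := by
    unfold AkR
    calc (((2 * k - 2).factorial : ℝ) / ((k - 1).factorial : ℝ)) * rkR k ^ (2 * k + 1)
        ≤ ((2 * k : ℕ) : ℝ) ^ (k - 1) * (1 / (8 + 8 * (k : ℝ))) ^ k := by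
          apply mul_le_mul hCle hrpow (by positivity) (by positivity)
      _ ≤ ((2 * k : ℕ) : ℝ) ^ (k - 1) * (1 / (8 * (k : ℝ))) ^ k := by
          apply mul_le_mul_of_nonneg_left hstep (by positivity)
  -- final arithmetic
  have hfin : ((2 * k : ℕ) : ℝ) ^ (k - 1) * (1 / (8 * (k : ℝ))) ^ k
      ≤ (1 / 4 : ℝ) ^ (k - 1) := by
    obtain ⟨m, rfl⟩ : ∃ m, k = m + 1 := ⟨k - 1, by omega⟩
    have hm : (m + 1 : ℕ) - 1 = m := by omega
    rw [hm]
    have hkR : (0:ℝ) < ((m : ℝ) + 1) := by positivity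
    have hcast : ((2 * (m + 1) : ℕ) : ℝ) = 2 * ((m:ℝ) + 1) := by push_cast; ring
    rw [hcast]
    have hsplit : (1 / (8 * ((m + 1 : ℕ) : ℝ))) ^ (m + 1)
        = (1 / (8 * ((m:ℝ) + 1))) ^ m * (1 / (8 * ((m:ℝ) + 1))) := by
      push_cast; ring
    rw [hsplit]
    have hprod : (2 * ((m:ℝ) + 1)) ^ m * ((1 / (8 * ((m:ℝ) + 1))) ^ m)
        = (1/4 : ℝ) ^ m := by
      rw [← mul_pow]
      have hbase : 2 * ((m:ℝ) + 1) * (1 / (8 * ((m:ℝ) + 1))) = 1/4 := by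
        field_simp; ring
      rw [hbase]
    calc (2 * ((m:ℝ) + 1)) ^ m * ((1 / (8 * ((m:ℝ) + 1))) ^ m * (1 / (8 * ((m:ℝ) + 1))))
        = (2 * ((m:ℝ) + 1)) ^ m * ((1 / (8 * ((m:ℝ) + 1))) ^ m)
          * (1 / (8 * ((m:ℝ) + 1))) := by ring
      _ = (1/4 : ℝ) ^ m * (1 / (8 * ((m:ℝ) + 1))) := by rw [hprod]
      _ ≤ (1/4 : ℝ) ^ m * 1 := by
          apply mul_le_mul_of_nonneg_left _ (by positivity)
          rw [div_le_one (by positivity)]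
          linarith
      _ = (1/4 : ℝ) ^ m := by ring
  linarith

lemma AkR_tendsto : Tendsto AkR atTop (nhds 0) := by
  apply squeeze_zero' (Filter.Eventually.of_forall AkR_nonneg)
  · filter_upwards [eventually_ge_atTop 1] with k hk
    exact AkR_le k hk
  · have h1 : Tendsto (fun n : ℕ => (1 / 4 : ℝ) ^ n) atTop (nhds 0) :=
      tendsto_pow_atTop_nhds_zero_of_lt_one (by norm_num) (by norm_num)
    exact h1.comp (tendsto_sub_atTop_nat 1)

/-- The maximum of `|Δ_k(z) − p_k(z)|` over the complex circle
`|z| = 1/√(8+8k)` tends to `0` as `k → ∞`. -/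
theorem statement2 :
    Tendsto
      (fun k : ℕ =>
        sSup ((fun z : ℂ => ‖DdC k z - PpC k z‖) ''
          {z : ℂ | ‖z‖ = 1 / Real.sqrt (8 + 8 * k)}))
      atTop (nhds 0) := by
  have hM : Tendsto (fun k : ℕ => 4 * AkR k * (2 + AkR k)) atTop (nhds 0) := by
    have := ((tendsto_const_nhds (x := (4:ℝ)) (f := atTop)).mul AkR_tendsto).mul
      ((tendsto_const_nhds (x := (2:ℝ)) (f := atTop)).add AkR_tendsto)
    simpa using this
  apply squeeze_zero _ _ hM
  · intro k
    apply Real.sSup_nonneg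
    rintro x ⟨z, _, rfl⟩
    exact norm_nonneg _
  · intro k
    apply Real.sSup_le
    · rintro x ⟨z, hz, rfl⟩
      exact pointwise_bound k z hz
    · have := AkR_nonneg k
      positivity
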